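/- arXiv:2205.08126 — 3 statements merged into one kernel-verified Lean document; each statement's English description precedes it below -/
import Mathlib

section
/- Let n ≥ 3. If the hypercube Q_n has a k-symmetric Hamilton cycle, then k is a power of 2 and k < 2n. -/
/-- The `n`-dimensional hypercube graph: vertices are bitstrings of length `n`,
two strings being adjacent iff they differ in exactly one bit. -/
def hypercube (n : ℕ) : SimpleGraph (Fin n → Bool) where
  Adj x y := hammingDist x y = 1
  symm := ⟨fun x y (h : hammingDist x y = 1) => by rwa [hammingDist_comm]⟩
  loopless := ⟨fun x (h : hammingDist x x = 1) => by simp [hammingDist_self] at h⟩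

/-- `x : ZMod N → V` is a Hamilton cycle of `G`: a cyclic listing of all vertices of `G`
in which consecutive vertices are adjacent. -/
def IsHamCycle {V : Type*} (G : SimpleGraph V) {N : ℕ} (x : ZMod N → V) : Prop :=
  Function.Bijective x ∧ ∀ i : ZMod N, G.Adj (x i) (x (i + 1))

/-- The Hamilton cycle `x` of `G` is `k`-symmetric: `k` divides `N` and the map
`x i ↦ x (i + N/k)` is an automorphism of `G`. -/
def IsSymmHamCycle {V : Type*} (G : SimpleGraph V) {N : ℕ} (x : ZMod N → V) (k : ℕ) : Prop :=
  IsHamCycle G x ∧ k ∣ N ∧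
    ∃ f : G ≃g G, ∀ i : ZMod N, f (x i) = x (i + ((N / k : ℕ) : ZMod N))

namespace SymmHCAux

open Finset

variable {n : ℕ}

/-! ### Graph isomorphisms of the hypercube preserve Hamming distance -/

lemma filter_update (x y : Fin n → Bool) (j : Fin n) (hj : x j ≠ y j) :
    ({i | x i ≠ Function.update x j (y j) i} : Finset (Fin n)) = {j} := by
  ext i
  by_cases hij : i = j <;> simp [hij, Function.update, hj, Ne.symm hj]

lemma filter_update' (x y : Fin n → Bool) (j : Fin n) :
    ({i | Function.update x j (y j) i ≠ y i} : Finset (Fin n)) =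
      ({i | x i ≠ y i} : Finset (Fin n)).erase j := by
  ext i
  by_cases hij : i = j <;> simp [hij, Function.update]

lemma hd_le (φ : (Fin n → Bool) → (Fin n → Bool))
    (hφ : ∀ a b, hammingDist a b = 1 → hammingDist (φ a) (φ b) = 1) :
    ∀ (m : ℕ) (x y : Fin n → Bool), hammingDist x y ≤ m → hammingDist (φ x) (φ y) ≤ m := by
  intro m
  induction m with
  | zero =>
    intro x y hxy
    rw [Nat.le_zero, hammingDist_eq_zero] at hxy
    simp [hxy]
  | succ m ih =>
    intro x y hxy
    rcases Nat.lt_or_ge (hammingDist x y) (m+1) with hlt | hge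
    · exact (ih x y (Nat.lt_succ_iff.mp hlt)).trans (Nat.le_succ m)
    have hd : hammingDist x y = m + 1 := le_antisymm hxy hge
    have hne : ({i | x i ≠ y i} : Finset (Fin n)).Nonempty := by
      rw [← Finset.card_pos]
      change 0 < hammingDist x y
      omega
    obtain ⟨j, hj⟩ := hne
    have hj' : x j ≠ y j := by simpa using hj
    set x' := Function.update x j (y j) with hx'
    have h1 : hammingDist x x' = 1 := by
      show ({i | x i ≠ x' i} : Finset (Fin n)).card = 1
      rw [hx', filter_update x y j hj', Finset.card_singleton]
    have h2 : hammingDist x' y ≤ m := by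
      show ({i | x' i ≠ y i} : Finset (Fin n)).card ≤ m
      rw [hx', filter_update' x y j]
      have := Finset.card_erase_of_mem hj
      have hcard : ({i | x i ≠ y i} : Finset (Fin n)).card = m + 1 := hd
      omega
    calc hammingDist (φ x) (φ y) ≤ hammingDist (φ x) (φ x') + hammingDist (φ x') (φ y) :=
          hammingDist_triangle _ _ _
      _ ≤ 1 + m := Nat.add_le_add (le_of_eq (hφ _ _ h1)) (ih x' y h2)
      _ = m + 1 := Nat.add_comm 1 m

lemma iso_hd (f : hypercube n ≃g hypercube n) (x y : Fin n → Bool) :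
    hammingDist (f x) (f y) = hammingDist x y := by
  have hf : ∀ a b, hammingDist a b = 1 → hammingDist (f a) (f b) = 1 := by
    intro a b hab
    exact f.map_adj_iff.mpr hab
  have hg : ∀ a b, hammingDist a b = 1 → hammingDist (f.symm a) (f.symm b) = 1 := by
    intro a b hab
    exact f.symm.map_adj_iff.mpr hab
  apply le_antisymm
  · exact hd_le f hf _ x y le_rfl
  · have := hd_le f.symm hg _ (f x) (f y) le_rfl
    simpa using this

/-! ### Classification of Hamming-distance preserving maps -/

def zeroV (n : ℕ) : Fin n → Bool := fun _ => false
def eV (i : Fin n) : Fin n → Bool := fun j => decide (j = i)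

lemma wt_eq (x : Fin n → Bool) :
    hammingDist x (zeroV n) = ({i | x i = true} : Finset (Fin n)).card := by
  show ({i | x i ≠ zeroV n i} : Finset (Fin n)).card = _
  congr 1
  ext i
  simp [zeroV]

lemma dist_eV_lt_iff (x : Fin n → Bool) (i : Fin n) :
    x i = true ↔ hammingDist x (eV i) < hammingDist x (zeroV n) := by
  by_cases hxi : x i = true
  · have hmem : i ∈ ({j | x j = true} : Finset (Fin n)) := by simp [hxi]
    have hset : ({j | x j ≠ eV i j} : Finset (Fin n)) =
        ({j | x j = true} : Finset (Fin n)).erase i := by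
      ext j; simp only [Finset.mem_filter, Finset.mem_univ, true_and]; by_cases hji : j = i <;> simp [hji, eV, hxi]
    have hd : hammingDist x (eV i) = ({j | x j = true} : Finset (Fin n)).card - 1 := by
      show ({j | x j ≠ eV i j} : Finset (Fin n)).card = _
      rw [hset, Finset.card_erase_of_mem hmem]
    have hpos : 0 < ({j | x j = true} : Finset (Fin n)).card := card_pos.mpr ⟨i, hmem⟩
    rw [wt_eq, hd]
    constructor
    · intro _; omega
    · intro _; exact hxi
  · have hmem : i ∉ ({j | x j = true} : Finset (Fin n)) := by simp [hxi]
    have hset : ({j | x j ≠ eV i j} : Finset (Fin n)) =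
        insert i ({j | x j = true} : Finset (Fin n)) := by
      ext j; simp only [Finset.mem_filter, Finset.mem_univ, true_and]; by_cases hji : j = i <;> simp [hji, eV, hxi]
    have hd : hammingDist x (eV i) = ({j | x j = true} : Finset (Fin n)).card + 1 := by
      show ({j | x j ≠ eV i j} : Finset (Fin n)).card = _
      rw [hset, Finset.card_insert_of_notMem hmem]
    rw [wt_eq, hd]
    constructor
    · intro h; exact absurd h hxi
    · intro h; omega

lemma classify (F : (Fin n → Bool) → (Fin n → Bool))
    (hF : ∀ a b, hammingDist (F a) (F b) = hammingDist a b) :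
    ∃ (ρ : Equiv.Perm (Fin n)) (t : Fin n → Bool),
      ∀ x j, F x j = xor (x (ρ j)) (t j) := by
  set t : Fin n → Bool := F (zeroV n) with ht
  set G : (Fin n → Bool) → (Fin n → Bool) := fun x j => xor (F x j) (t j) with hG
  have hGd : ∀ a b, hammingDist (G a) (G b) = hammingDist a b := by
    intro a b
    rw [← hF a b]
    show ({i | G a i ≠ G b i} : Finset (Fin n)).card =
      ({i | F a i ≠ F b i} : Finset (Fin n)).card
    congr 1
    ext i
    have : ∀ p q c : Bool, (xor p c ≠ xor q c) ↔ p ≠ q := by decide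
    simp [hG, this]
  have hG0 : G (zeroV n) = zeroV n := by
    funext j
    simp [hG, ← ht, zeroV]
  have hwt : ∀ x, hammingDist (G x) (zeroV n) = hammingDist x (zeroV n) := by
    intro x
    have h := hGd x (zeroV n)
    rwa [hG0] at h
  have hw1 : ∀ i : Fin n, ({j | G (eV i) j = true} : Finset (Fin n)).card = 1 := by
    intro i
    rw [← wt_eq, hwt, wt_eq]
    have : ({j | eV i j = true} : Finset (Fin n)) = {i} := by
      ext j; simp [eV]
    rw [this, card_singleton]
  choose σ hσ using fun i => Finset.card_eq_one.mp (hw1 i)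
  have hGe : ∀ i, G (eV i) = eV (σ i) := by
    intro i
    funext j
    have hmem : G (eV i) j = true ↔ j = σ i := by
      rw [show (G (eV i) j = true) ↔ j ∈ ({j' | G (eV i) j' = true} : Finset (Fin n)) by simp,
        hσ i]
      simp
    have : eV (σ i) j = decide (j = σ i) := rfl
    rw [this]
    rcases Bool.eq_false_or_eq_true (G (eV i) j) with hb | hb <;>
      rw [hb] <;> simp_all
  have hkey : ∀ (x : Fin n → Bool) (i : Fin n), G x (σ i) = x i := by
    intro x i
    have h1 := dist_eV_lt_iff (G x) (σ i)
    rw [← hGe i, hGd, hwt, ← dist_eV_lt_iff x i] at h1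
    rcases Bool.eq_false_or_eq_true (x i) with hb | hb <;>
      rcases Bool.eq_false_or_eq_true (G x (σ i)) with hb2 | hb2 <;> simp_all
  have hinj : Function.Injective σ := by
    intro i i' hii
    have h1 : G (eV i) (σ i) = eV i i := hkey (eV i) i
    have h2 : G (eV i) (σ i) = eV i i' := by
      rw [hii]
      exact hkey (eV i) i'
    have h3 : eV i i' = eV i i := by rw [← h1, ← h2]
    have h4 : eV i i = true := by simp [eV]
    rw [h4] at h3
    have h5 : i' = i := by simpa [eV] using h3
    exact h5.symm
  have hbij : Function.Bijective σ := Finite.injective_iff_bijective.mp hinj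
  set π : Equiv.Perm (Fin n) := Equiv.ofBijective σ hbij with hπ
  refine ⟨π.symm, t, fun x j => ?_⟩
  have h1 : G x (σ (π.symm j)) = x (π.symm j) := hkey x (π.symm j)
  have h2 : σ (π.symm j) = j := π.apply_symm_apply j
  rw [h2] at h1
  have : xor (G x j) (t j) = F x j := by
    simp [hG, Bool.xor_assoc]
  rw [← this, h1]

/-! ### Arithmetic helpers -/

def bz : Bool → ZMod 2 := fun b => if b then 1 else 0

lemma bz_xor (a b : Bool) : bz (xor a b) = bz a + bz b := by
  cases a <;> cases b <;> decide

lemma bz_eq_zero {a : Bool} (h : bz a = 0) : a = false := by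
  cases a
  · rfl
  · exact absurd h (by decide)

lemma sum_bz_xor (u v : Fin n → Bool) :
    ∑ jx, bz (xor (u jx) (v jx)) = (hammingDist u v : ZMod 2) := by
  have h1 : ∀ a b : Bool, bz (xor a b) = if a ≠ b then (1 : ZMod 2) else 0 := by decide
  simp only [h1]
  rw [Finset.sum_boole]
  rfl

lemma two_pow_ge (e : ℕ) (he : 2 ≤ e) : e + 2 ≤ 2 ^ e := by
  induction e with
  | zero => omega
  | succ m ih =>
    rcases Nat.lt_or_ge m 2 with hm | hm
    · interval_cases m <;> simp_all
    · have := ih hm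
      have h1 : 2 ^ (m + 1) = 2 ^ m + 2 ^ m := by ring
      have h2 : 1 ≤ 2 ^ m := Nat.one_le_two_pow
      omega

lemma orderOf_mem_cycleType (ρ : Equiv.Perm (Fin n)) (e : ℕ) (he : 1 ≤ e)
    (hord : orderOf ρ = 2 ^ e) : orderOf ρ ∈ ρ.cycleType := by
  by_contra hmem
  have hdvd : ρ.cycleType.lcm ∣ 2 ^ (e - 1) := by
    apply Multiset.lcm_dvd.mpr
    intro b hb
    have hb2 : b ∣ 2 ^ e := by
      rw [← hord, ← Equiv.Perm.lcm_cycleType]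
      exact Multiset.dvd_lcm hb
    obtain ⟨a, ha, rfl⟩ := (Nat.dvd_prime_pow Nat.prime_two).mp hb2
    have hne : a ≠ e := by
      rintro rfl
      exact hmem (hord ▸ hb)
    exact pow_dvd_pow 2 (by omega)
  rw [Equiv.Perm.lcm_cycleType, hord] at hdvd
  have := Nat.le_of_dvd (pow_pos (by norm_num) _) hdvd
  have h2 : 2 ^ (e - 1) < 2 ^ e := Nat.pow_lt_pow_right (by norm_num) (by omega)
  omega

/-! ### Main argument -/

theorem stmt1' (n k : ℕ) (hn : 3 ≤ n) (x : ZMod (2 ^ n) → (Fin n → Bool))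
    (hdvd : k ∣ 2 ^ n)
    (hinj : Function.Injective x) (hsurj : Function.Surjective x)
    (hadj : ∀ i : ZMod (2 ^ n), hammingDist (x i) (x (i + 1)) = 1)
    (F : (Fin n → Bool) → (Fin n → Bool))
    (hFx : ∀ i : ZMod (2 ^ n), F (x i) = x (i + ((2 ^ n / k : ℕ) : ZMod (2 ^ n))))
    (ρ : Equiv.Perm (Fin n)) (t : Fin n → Bool)
    (hρ : ∀ v jx, F v jx = xor (v (ρ jx)) (t jx)) :
    k < 2 * n := by
  by_contra hlt
  push_neg at hlt   -- hlt : 2 * n ≤ k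
  haveI : NeZero (2 ^ n) := ⟨pow_ne_zero n two_ne_zero⟩
  obtain ⟨ipow, hip, hkpow⟩ := (Nat.dvd_prime_pow Nat.prime_two).mp hdvd
  set L := 2 ^ n / k with hLdef
  have hkL : k * L = 2 ^ n := Nat.mul_div_cancel' hdvd
  have hNpos : 0 < 2 ^ n := pow_pos (by norm_num) n
  have hLpos : 0 < L := by
    rcases Nat.eq_zero_or_pos L with h0 | hp
    · rw [h0, Nat.mul_zero] at hkL; omega
    · exact hp
  -- iterate formula along the cycle
  have hiter : ∀ (j : ℕ) (i : ZMod (2 ^ n)),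
      F^[j] (x i) = x (i + ((j * L : ℕ) : ZMod (2 ^ n))) := by
    intro j
    induction j with
    | zero => intro i; simp
    | succ m ih =>
      intro i
      rw [Function.iterate_succ_apply', ih i, hFx]
      congr 1
      push_cast
      ring
  -- k divides any j with F^[j] = id
  have hid_of : ∀ j : ℕ, (∀ v, F^[j] v = v) → k ∣ j := by
    intro j hj
    have h1 : x ((0 : ZMod (2 ^ n)) + ((j * L : ℕ) : ZMod (2 ^ n))) = x 0 := by
      rw [← hiter j 0, hj]
    have h2 : ((j * L : ℕ) : ZMod (2 ^ n)) = 0 := by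
      have := hinj h1
      simpa using this
    have h3 : 2 ^ n ∣ j * L := (ZMod.natCast_eq_zero_iff _ _).mp h2
    rw [← hkL, Nat.mul_comm k L, Nat.mul_comm j L] at h3
    exact (Nat.mul_dvd_mul_iff_left hLpos).mp h3
  -- F^[k] = id
  have hFk : ∀ v, F^[k] v = v := by
    intro v
    obtain ⟨i, rfl⟩ := hsurj v
    rw [hiter k i, hkL]
    norm_num [ZMod.natCast_self]
  -- structure of iterates
  set c : ℕ → (Fin n → Bool) := fun j => F^[j] (zeroV n) with hc
  have hstruct : ∀ (j : ℕ) (v : Fin n → Bool) (jx : Fin n),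
      F^[j] v jx = xor (v ((ρ ^ j : Equiv.Perm (Fin n)) jx)) (c j jx) := by
    intro j
    induction j with
    | zero => intro v jx; simp [hc, zeroV]
    | succ m ih =>
      intro v jx
      have hcsucc : c (m + 1) jx = xor (t ((ρ ^ m : Equiv.Perm (Fin n)) jx)) (c m jx) := by
        show F^[m+1] (zeroV n) jx = _
        rw [Function.iterate_succ_apply, ih (F (zeroV n)) jx, hρ]
        simp [zeroV]
      rw [Function.iterate_succ_apply, ih (F v) jx, hρ, hcsucc]
      have hpow : (ρ ^ (m + 1) : Equiv.Perm (Fin n)) jx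
          = ρ ((ρ ^ m : Equiv.Perm (Fin n)) jx) := by
        rw [pow_succ']
        rfl
      rw [hpow, Bool.xor_assoc]
  -- ρ ^ k = 1
  have hck : c k = zeroV n := hFk (zeroV n)
  have hρk : ρ ^ k = 1 := by
    apply Equiv.ext
    intro jx
    have h1 := hstruct k (eV ((ρ ^ k : Equiv.Perm (Fin n)) jx)) jx
    rw [hFk, hck] at h1
    have h2 : eV ((ρ ^ k : Equiv.Perm (Fin n)) jx) ((ρ ^ k : Equiv.Perm (Fin n)) jx)
        = true := by simp [eV]
    rw [h2] at h1
    have h3 : eV ((ρ ^ k : Equiv.Perm (Fin n)) jx) jx = true := by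
      rw [h1]
      simp [zeroV]
    have h4 : jx = (ρ ^ k : Equiv.Perm (Fin n)) jx := by simpa [eV] using h3
    simpa using h4.symm
  have hrk : orderOf ρ ∣ k := orderOf_dvd_of_pow_eq_one hρk
  have hrpos : 0 < orderOf ρ := orderOf_pos ρ
  -- F^[2 · orderOf ρ] = id
  have hρr : ρ ^ orderOf ρ = 1 := pow_orderOf_eq_one ρ
  have hFr : ∀ (v : Fin n → Bool) (jx : Fin n),
      F^[orderOf ρ] v jx = xor (v jx) (c (orderOf ρ) jx) := by
    intro v jx
    have h := hstruct (orderOf ρ) v jx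
    rw [hρr] at h
    simpa using h
  have hF2r : ∀ v, F^[2 * orderOf ρ] v = v := by
    intro v
    funext jx
    rw [two_mul, Function.iterate_add_apply, hFr, hFr]
    cases v jx <;> cases c (orderOf ρ) jx <;> rfl
  have hk2r : k ∣ 2 * orderOf ρ := hid_of _ hF2r
  have hkle : k ≤ 2 * orderOf ρ := Nat.le_of_dvd (by omega) hk2r
  -- orderOf ρ ≤ n
  obtain ⟨e, he, her⟩ := (Nat.dvd_prime_pow Nat.prime_two).mp (hkpow ▸ hrk)
  have he1 : 1 ≤ e := by
    rcases Nat.eq_zero_or_pos e with h0 | hp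
    · rw [h0, pow_zero] at her; omega
    · exact hp
  have hmem : orderOf ρ ∈ ρ.cycleType := orderOf_mem_cycleType ρ e he1 her
  have hrn : orderOf ρ ≤ n := by
    have h1 := Equiv.Perm.le_card_support_of_mem_cycleType hmem
    have h2 : ρ.support.card ≤ n := by
      have := Finset.card_le_univ ρ.support
      simpa using this
    omega
  -- conclude k = 2n and orderOf ρ = n
  have hkeq : k = 2 * n := by omega
  have hreq : orderOf ρ = n := by omega
  -- ρ is an n-cycle with full support
  have hct : ρ.cycleType = {n} := by
    apply Equiv.Perm.cycleType_of_card_le_mem_cycleType_add_two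
    · simp only [Fintype.card_fin]; omega
    · rwa [hreq] at hmem
  have hcyc : ρ.IsCycle := by
    rw [← Equiv.Perm.card_cycleType_eq_one, hct]
    rfl
  have hsupp : ρ.support = Finset.univ := by
    apply Finset.eq_univ_of_card
    have hsum := Equiv.Perm.sum_cycleType ρ
    rw [hct] at hsum
    simp only [Multiset.sum_singleton] at hsum
    simp [← hsum]
  have hmoves : ∀ jx : Fin n, ρ jx ≠ jx := by
    intro jx
    have : jx ∈ ρ.support := by rw [hsupp]; exact Finset.mem_univ jx
    exact Equiv.Perm.mem_support.mp this
  -- orbit map is bijective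
  have horbit : ∀ jx : Fin n, Function.Bijective (fun j : Fin n => (ρ ^ (j : ℕ)) jx) := by
    intro jx
    apply Finite.injective_iff_bijective.mp
    have key : ∀ a b : Fin n, (a : ℕ) ≤ (b : ℕ) →
        (ρ ^ (a : ℕ)) jx = (ρ ^ (b : ℕ)) jx → a = b := by
      intro a b hab heq
      have h1 : (ρ ^ ((a : ℕ) + ((b : ℕ) - (a : ℕ)))) jx = (ρ ^ (a : ℕ)) jx := by
        rw [Nat.add_sub_cancel' hab, heq]
      rw [pow_add, Equiv.Perm.mul_apply] at h1
      have h2 : (ρ ^ ((b : ℕ) - (a : ℕ))) jx = jx := (ρ ^ (a : ℕ)).injective h1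
      have h3 : ρ ^ ((b : ℕ) - (a : ℕ)) = 1 :=
        (hcyc.pow_eq_one_iff' (hmoves jx)).mpr h2
      have h4 : orderOf ρ ∣ (b : ℕ) - (a : ℕ) := orderOf_dvd_of_pow_eq_one h3
      rw [hreq] at h4
      have h5 : (b : ℕ) - (a : ℕ) < n := by omega
      have h6 : (b : ℕ) - (a : ℕ) = 0 := by
        rcases Nat.eq_zero_or_pos ((b : ℕ) - (a : ℕ)) with h0 | hpos'
        · exact h0
        · have := Nat.le_of_dvd hpos' h4; omega
      exact Fin.ext (by omega)
    intro a b hab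
    rcases Nat.le_total (a : ℕ) (b : ℕ) with hle | hle
    · exact key a b hle hab
    · exact (key b a hle hab.symm).symm
  -- the weight function mod 2
  set X : ℕ → (Fin n → Bool) := fun m => x ((m : ℕ) : ZMod (2 ^ n)) with hX
  set W : ℕ → ZMod 2 := fun m => ∑ jx, bz (X m jx) with hW
  set T : ZMod 2 := ∑ jx, bz (t jx) with hT
  have hW1 : ∀ m, W (m + 1) = W m + 1 := by
    intro m
    have hd : hammingDist (X m) (X (m + 1)) = 1 := by
      simp only [hX]
      have hcast : (((m + 1 : ℕ)) : ZMod (2 ^ n)) = ((m : ℕ) : ZMod (2 ^ n)) + 1 := by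
        push_cast; ring
      rw [hcast]
      exact hadj _
    have hbz : ∀ jx, bz (X (m + 1) jx) = bz (X m jx) + bz (xor (X m jx) (X (m + 1) jx)) := by
      intro jx
      cases hb : X m jx <;> cases hb2 : X (m + 1) jx <;> decide
    calc W (m + 1) = ∑ jx, bz (X (m + 1) jx) := rfl
      _ = ∑ jx, (bz (X m jx) + bz (xor (X m jx) (X (m + 1) jx))) :=
          Finset.sum_congr rfl fun jx _ => hbz jx
      _ = W m + ∑ jx, bz (xor (X m jx) (X (m + 1) jx)) := by rw [Finset.sum_add_distrib]
      _ = W m + (hammingDist (X m) (X (m + 1)) : ZMod 2) := by rw [sum_bz_xor]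
      _ = W m + 1 := by rw [hd]; norm_num
  have hWadd : ∀ m j, W (m + j) = W m + (j : ZMod 2) := by
    intro m j
    induction j with
    | zero => simp
    | succ i ih =>
      rw [← Nat.add_assoc, hW1, ih, Nat.cast_add_one, ← add_assoc]
  have hXL : ∀ m : ℕ, X (m + L) = F (X m) := by
    intro m
    show x (((m + L : ℕ) : ℕ) : ZMod (2 ^ n)) = F (x ((m : ℕ) : ZMod (2 ^ n)))
    rw [hFx]
    congr 1
    push_cast
    ring
  have hWL : ∀ m, W (m + L) = W m + T := by
    intro m
    calc W (m + L) = ∑ jx, bz (F (X m) jx) := by rw [hW]; simp only [hXL m]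
      _ = ∑ jx, (bz (X m (ρ jx)) + bz (t jx)) := by
          refine Finset.sum_congr rfl fun jx _ => ?_
          rw [hρ, bz_xor]
      _ = (∑ jx, bz (X m (ρ jx))) + T := by rw [Finset.sum_add_distrib]
      _ = W m + T := by rw [Equiv.sum_comp ρ (fun j => bz (X m j))]
  -- L is even
  have hne2 : 2 ≤ e := by
    rcases Nat.lt_or_ge e 2 with hlt2 | hge2
    · interval_cases e <;> omega
    · exact hge2
  have hen : e + 1 ≤ n := by
    have := two_pow_ge e hne2
    omega
  have hLeven : 2 ∣ L := by
    have hk2 : k = 2 ^ (e + 1) := by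
      rw [hkeq, ← hreq, her, pow_succ]
      ring
    have hLval : L = 2 ^ (n - (e + 1)) := by
      rw [hLdef, hk2, Nat.pow_div hen (by norm_num)]
    rw [hLval]
    have h1 : 1 ≤ n - (e + 1) := by
      have := two_pow_ge e hne2
      omega
    exact (dvd_pow_self 2 (one_ne_zero)).trans (pow_dvd_pow 2 h1)
  have hT0 : T = 0 := by
    have h1 := hWL 0
    have h2 := hWadd 0 L
    have h3 : ((L : ℕ) : ZMod 2) = 0 := (ZMod.natCast_eq_zero_iff _ _).mpr hLeven
    have h4 : W 0 + T = W 0 + 0 := by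
      rw [← h1, h2, h3]
    exact add_left_cancel h4
  -- c n = 0
  have hcrec : ∀ (m : ℕ) (jx : Fin n),
      bz (c m jx) = ∑ j ∈ Finset.range m, bz (t ((ρ ^ j : Equiv.Perm (Fin n)) jx)) := by
    intro m
    induction m with
    | zero => intro jx; simp [hc, zeroV, bz]
    | succ i ih =>
      intro jx
      have hstep : c (i + 1) jx = xor (c i (ρ jx)) (t jx) := by
        show F^[i+1] (zeroV n) jx = _
        rw [Function.iterate_succ_apply', hρ]
      have hterm : ∀ j : ℕ, ((ρ ^ (j + 1) : Equiv.Perm (Fin n)) jx)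
          = (ρ ^ j : Equiv.Perm (Fin n)) (ρ jx) := by
        intro j; rw [pow_succ]; rfl
      have h0 : ((ρ ^ 0 : Equiv.Perm (Fin n)) jx) = jx := by simp
      rw [hstep, bz_xor, ih (ρ jx), Finset.sum_range_succ']
      simp only [hterm, h0]
  have hcn : ∀ jx, c n jx = false := by
    intro jx
    apply bz_eq_zero
    rw [hcrec n jx]
    have h1 : ∑ j ∈ Finset.range n, bz (t ((ρ ^ j : Equiv.Perm (Fin n)) jx))
        = ∑ j : Fin n, bz (t ((ρ ^ (j : ℕ) : Equiv.Perm (Fin n)) jx)) := by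
      rw [← Fin.sum_univ_eq_sum_range]
    rw [h1]
    have h2 := Fintype.sum_bijective _ (horbit jx)
      (fun j : Fin n => bz (t ((ρ ^ (j : ℕ) : Equiv.Perm (Fin n)) jx)))
      (fun jx' => bz (t jx')) (fun j => rfl)
    rw [h2, ← hT, hT0]
  -- F^[n] = id, contradiction
  have hρn : ρ ^ n = 1 := orderOf_dvd_iff_pow_eq_one.mp (by rw [hreq])
  have hFn : ∀ v, F^[n] v = v := by
    intro v
    funext jx
    rw [hstruct n v jx, hcn jx, hρn]
    simp
  have hkn : k ∣ n := hid_of n hFn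
  have := Nat.le_of_dvd (by omega) hkn
  omega

end SymmHCAux

theorem stmt1 (n k : ℕ) (hn : 3 ≤ n) (x : ZMod (2 ^ n) → (Fin n → Bool))
    (h : IsSymmHamCycle (hypercube n) x k) :
    (∃ i : ℕ, k = 2 ^ i) ∧ k < 2 * n := by
  obtain ⟨⟨⟨hinj, hsurj⟩, hadj⟩, hdvd, f, hf⟩ := h
  constructor
  · obtain ⟨i, _, rfl⟩ := (Nat.dvd_prime_pow Nat.prime_two).mp hdvd
    exact ⟨i, rfl⟩
  · have hFd : ∀ a b, hammingDist (f a) (f b) = hammingDist a b := SymmHCAux.iso_hd f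
    obtain ⟨ρ, t, hρ⟩ := SymmHCAux.classify (fun v => f v) hFd
    exact SymmHCAux.stmt1' n k hn x hdvd hinj hsurj hadj (fun v => f v) hf ρ t hρ
end

section
/- Let g be an automorphism of a graph G all of whose orbits have the same size k ≥ 2, let R be a set containing exactly one vertex from each orbit of g, and let P be a path in G whose vertex set is exactly R and which starts at a vertex u that is adjacent to g(u) in G. Let H be a graph with an even number of vertices, let h be an automorphism of H whose order divides k, and let Q be a Hamilton path of H from some vertex v to h(v). Then the Cartesian product G □ H has a k-symmetric Hamilton cycle. -/
/-- The "snake" function underlying the symmetric Hamilton cycle in the box product. -/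
private def zig {V W : Type*} (g : V → V) (h : W → W) (Lp : List V) (Lq : List W)
    (u : V) (v : W) (i : ℕ) : V × W :=
  (g^[i / (Lp.length * Lq.length)]
     (Lp.getD (if Even ((i % (Lp.length * Lq.length)) / Lp.length)
               then (i % (Lp.length * Lq.length)) % Lp.length
               else Lp.length - 1 - (i % (Lp.length * Lq.length)) % Lp.length) u),
   h^[i / (Lp.length * Lq.length)] (Lq.getD ((i % (Lp.length * Lq.length)) / Lp.length) v))

private lemma decomp (m n t j s : ℕ) (hj : j < n) (hs : s < m) :
    (t * (m * n) + (j * m + s)) / (m * n) = t ∧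
    ((t * (m * n) + (j * m + s)) % (m * n)) / m = j ∧
    ((t * (m * n) + (j * m + s)) % (m * n)) % m = s := by
  have hm : 0 < m := by omega
  have hlt : j * m + s < m * n := by
    calc j * m + s < j * m + m := by omega
    _ = (j + 1) * m := by ring
    _ ≤ n * m := Nat.mul_le_mul_right m hj
    _ = m * n := Nat.mul_comm n m
  have h1 : t * (m * n) + (j * m + s) = (m * n) * t + (j * m + s) := by ring
  have hmod : (t * (m * n) + (j * m + s)) % (m * n) = j * m + s := by
    rw [h1, Nat.mul_add_mod, Nat.mod_eq_of_lt hlt]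
  refine ⟨?_, ?_, ?_⟩
  · rw [h1, Nat.mul_add_div (by omega), Nat.div_eq_of_lt hlt]
    omega
  · rw [hmod]
    have : j * m + s = m * j + s := by ring
    rw [this, Nat.mul_add_div hm, Nat.div_eq_of_lt hs]
    omega
  · rw [hmod]
    have : j * m + s = m * j + s := by ring
    rw [this, Nat.mul_add_mod, Nat.mod_eq_of_lt hs]

private lemma zig_eq {V W : Type*} (g : V → V) (h : W → W) (Lp : List V) (Lq : List W)
    (u : V) (v : W) (t j s : ℕ) (hj : j < Lq.length) (hs : s < Lp.length) :
    zig g h Lp Lq u v (t * (Lp.length * Lq.length) + (j * Lp.length + s)) =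
      (g^[t] (Lp.getD (if Even j then s else Lp.length - 1 - s) u),
       h^[t] (Lq.getD j v)) := by
  obtain ⟨h1, h2, h3⟩ := decomp Lp.length Lq.length t j s hj hs
  simp only [zig, h1, h2, h3]

/-- Lemma about lifting a path on orbit representatives to a `k`-symmetric Hamilton cycle
in a Cartesian (box) product. -/
theorem stmt2 {V W : Type*} [Fintype V] [Fintype W] [DecidableEq W]
    (G : SimpleGraph V) (H : SimpleGraph W) (k : ℕ) (hk : 2 ≤ k)
    -- `g` is an automorphism of `G` all of whose orbits have the same size `k`:
    (g : G ≃g G) (horb : ∀ v : V, Function.minimalPeriod (⇑g) v = k)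
    -- `R` contains exactly one vertex from each orbit of `g`:
    (R : Set V) (hR : ∀ v : V, ∃! r : V, r ∈ R ∧ ∃ i : ℕ, (⇑g)^[i] r = v)
    -- `P` is a path in `G` whose vertex set is exactly `R`, starting at a vertex `u`
    -- adjacent to `g u`:
    (u w : V) (P : G.Walk u w) (hP : P.IsPath)
    (hsupp : {v : V | v ∈ P.support} = R)
    (hadj : G.Adj u (g u))
    -- `H` has an even number of vertices:
    (heven : Even (Fintype.card W))
    -- `h` is an automorphism of `H` whose order divides `k`:
    (h : H ≃g H) (hord : ∀ b : W, (⇑h)^[k] b = b)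
    -- `Q` is a Hamilton path of `H` from some vertex `v` to `h v`:
    (v : W) (Q : H.Walk v (h v)) (hQ : Q.IsHamiltonian) :
    ∃ x : ZMod (Fintype.card (V × W)) → V × W,
      IsSymmHamCycle (G.boxProd H) x k := by
  classical
  set Lp := P.support with hLp_def
  set Lq := Q.support with hLq_def
  set m := Lp.length with hm_def
  set n := Lq.length with hn_def
  have hm : 0 < m := by
    rw [hm_def]; exact List.length_pos_iff.mpr P.support_ne_nil
  have hn0 : 0 < n := by
    rw [hn_def]; exact List.length_pos_iff.mpr Q.support_ne_nil
  haveI : Nonempty W := ⟨v⟩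
  have hn_card : n = Fintype.card W := by
    have h1 := hQ.length_eq
    have h2 : Q.support.length = Q.length + 1 := Q.length_support
    have hc : 1 ≤ Fintype.card W := Fintype.card_pos
    rw [hn_def, hLq_def, h2, h1]; omega
  have hneven : Even n := hn_card ▸ heven
  have hn2 : 2 ≤ n := by
    obtain ⟨c, hc⟩ := hneven; omega
  -- facts about g and h
  have hgk : ∀ a : V, (⇑g)^[k] a = a := fun a => by
    rw [← horb a]; exact Function.iterate_minimalPeriod
  have hhk : ∀ b : W, (⇑h)^[k] b = b := hord
  have hginj : Function.Injective ⇑g := g.toEquiv.injective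
  have hhinj : Function.Injective ⇑h := h.toEquiv.injective
  have hgadj : ∀ (t : ℕ) (a b : V), G.Adj a b → G.Adj ((⇑g)^[t] a) ((⇑g)^[t] b) := by
    intro t
    induction t with
    | zero => simp
    | succ t ih =>
      intro a b hab
      rw [Function.iterate_succ_apply', Function.iterate_succ_apply']
      exact g.map_adj_iff.mpr (ih a b hab)
  have hhadj : ∀ (t : ℕ) (a b : W), H.Adj a b → H.Adj ((⇑h)^[t] a) ((⇑h)^[t] b) := by
    intro t
    induction t with
    | zero => simp
    | succ t ih =>
      intro a b hab
      rw [Function.iterate_succ_apply', Function.iterate_succ_apply']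
      exact h.map_adj_iff.mpr (ih a b hab)
  -- chains of adjacency along supports
  have hPadj : ∀ a : ℕ, a + 1 < m → G.Adj (Lp.getD a u) (Lp.getD (a + 1) u) := by
    intro a ha
    have hchainP : List.Chain' G.Adj Lp := hLp_def.symm ▸ P.isChain_adj_support
    have hchain := List.isChain_iff_getElem.1 hchainP
    rw [List.getD_eq_getElem _ _ (by omega), List.getD_eq_getElem _ _ (by omega)]
    simpa using hchain a (by rw [hm_def] at ha; omega)
  have hQadj : ∀ a : ℕ, a + 1 < n → H.Adj (Lq.getD a v) (Lq.getD (a + 1) v) := by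
    intro a ha
    have hchainQ : List.Chain' H.Adj Lq := hLq_def.symm ▸ Q.isChain_adj_support
    have hchain := List.isChain_iff_getElem.1 hchainQ
    rw [List.getD_eq_getElem _ _ (by omega), List.getD_eq_getElem _ _ (by omega)]
    simpa using hchain a (by rw [hn_def] at ha; omega)
  have hPnodup : Lp.Nodup := hP.support_nodup
  have hQnodup : Lq.Nodup := hQ.isPath.support_nodup
  have hP0 : Lp.getD 0 u = u := by
    rw [hLp_def, P.support_eq_cons, List.getD_cons_zero]
  have hQ0 : Lq.getD 0 v = v := by
    rw [hLq_def, Q.support_eq_cons, List.getD_cons_zero]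
  have hQlast : Lq.getD (n - 1) v = h v := by
    have hgl := Q.getLast_support
    rw [List.getD_eq_getElem _ _ (by omega)]
    rw [← hgl, List.getLast_eq_getElem]
  -- key injectivity fact
  have hkey : ∀ t t' s s' : ℕ, t < k → t' < k → s < m → s' < m →
      (⇑g)^[t] (Lp.getD s u) = (⇑g)^[t'] (Lp.getD s' u) → t = t' ∧ s = s' := by
    intro t t' s s' ht ht' hs hs' heq
    have hmem : ∀ s₀ : ℕ, s₀ < m → Lp.getD s₀ u ∈ R := by
      intro s₀ hs₀
      rw [← hsupp]
      rw [List.getD_eq_getElem _ _ (by omega)]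
      exact List.getElem_mem _
    obtain ⟨r0, _, hr0uniq⟩ := hR ((⇑g)^[t] (Lp.getD s u))
    have e1 : Lp.getD s u = r0 := hr0uniq _ ⟨hmem s hs, t, rfl⟩
    have e2 : Lp.getD s' u = r0 := hr0uniq _ ⟨hmem s' hs', t', heq.symm⟩
    have hss : s = s' := by
      have hgd : Lp.getD s u = Lp.getD s' u := e1.trans e2.symm
      rw [List.getD_eq_getElem _ _ (by omega), List.getD_eq_getElem _ _ (by omega)] at hgd
      exact (hPnodup.getElem_inj_iff).1 hgd
    subst hss
    refine ⟨?_, rfl⟩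
    have hper : Function.minimalPeriod ⇑g (Lp.getD s u) = k := horb _
    exact Function.iterate_injOn_Iio_minimalPeriod (by rw [hper]; exact ht)
      (by rw [hper]; exact ht') heq
  -- cardinality of V
  have hcardV : Fintype.card V = k * m := by
    have hbij : Function.Bijective (fun p : Fin k × Fin m => (⇑g)^[p.1] (Lp.getD p.2 u)) := by
      constructor
      · rintro ⟨t, s⟩ ⟨t', s'⟩ heq
        obtain ⟨h1, h2⟩ := hkey t t' s s' t.2 t'.2 s.2 s'.2 heq
        simp only [Prod.mk.injEq]
        exact ⟨Fin.ext h1, Fin.ext h2⟩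
      · intro a
        obtain ⟨r, ⟨hrR, i, hri⟩, _⟩ := hR a
        have hrmem : r ∈ Lp := by
          have : r ∈ {v : V | v ∈ P.support} := hsupp ▸ hrR
          exact this
        obtain ⟨s, hs, hgets⟩ := List.mem_iff_getElem.1 hrmem
        refine ⟨(⟨i % k, Nat.mod_lt _ (by omega)⟩, ⟨s, hs⟩), ?_⟩
        have hr : Lp.getD s u = r := by rw [List.getD_eq_getElem _ _ hs, hgets]
        simp only
        rw [hr]
        calc (⇑g)^[i % k] r = (⇑g)^[i % Function.minimalPeriod ⇑g r] r := by rw [horb r]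
        _ = (⇑g)^[i] r := Function.iterate_mod_minimalPeriod_eq
        _ = a := hri
    have := Fintype.card_of_bijective hbij
    simpa using this.symm
  set N := Fintype.card (V × W) with hN_def
  have hN : N = k * (m * n) := by
    rw [hN_def, Fintype.card_prod, hcardV, ← hn_card]; ring
  have hNpos : 0 < N := by
    have : 0 < k := by omega
    rw [hN]; positivity
  haveI : NeZero N := ⟨by omega⟩
  -- abbreviate the zig function
  set y : ℕ → V × W := zig ⇑g ⇑h Lp Lq u v with hy_def
  have hy_eq : ∀ t j s : ℕ, j < n → s < m →
      y (t * (m * n) + (j * m + s)) =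
        ((⇑g)^[t] (Lp.getD (if Even j then s else m - 1 - s) u),
         (⇑h)^[t] (Lq.getD j v)) := by
    intro t j s hj hs
    simp only [hm_def] at hs
    simp only [hn_def] at hj
    simp only [hy_def, hm_def, hn_def]
    exact zig_eq ⇑g ⇑h Lp Lq u v t j s hj hs
  -- every natural number decomposes
  have hdecomp : ∀ i : ℕ, ∃ t j s : ℕ, j < n ∧ s < m ∧
      i = t * (m * n) + (j * m + s) := by
    intro i
    refine ⟨i / (m * n), (i % (m * n)) / m, (i % (m * n)) % m, ?_, ?_, ?_⟩
    · have h1 : i % (m * n) < m * n := Nat.mod_lt _ (by positivity)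
      exact Nat.div_lt_of_lt_mul (by omega)
    · exact Nat.mod_lt _ hm
    · have h1 := Nat.div_add_mod i (m * n)
      have h2 := Nat.div_add_mod (i % (m * n)) m
      have h3 : i / (m * n) * (m * n) = m * n * (i / (m * n)) := Nat.mul_comm _ _
      have h4 : i % (m * n) / m * m = m * (i % (m * n) / m) := Nat.mul_comm _ _
      omega
  -- periodicity of y modulo N
  have hyadd : ∀ i : ℕ, y (i + N) = y i := by
    intro i
    obtain ⟨t, j, s, hj, hs, hi⟩ := hdecomp i
    have hiN : i + N = (t + k) * (m * n) + (j * m + s) := by rw [hi, hN]; ring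
    rw [hiN, hi, hy_eq _ _ _ hj hs, hy_eq _ _ _ hj hs]
    have hg' : (⇑g)^[t + k] (Lp.getD (if Even j then s else m - 1 - s) u) =
        (⇑g)^[t] (Lp.getD (if Even j then s else m - 1 - s) u) := by
      rw [Function.iterate_add_apply, hgk]
    have hh' : (⇑h)^[t + k] (Lq.getD j v) = (⇑h)^[t] (Lq.getD j v) := by
      rw [Function.iterate_add_apply, hhk]
    rw [hg', hh']
  have hymod : ∀ i : ℕ, y (i % N) = y i := by
    intro i
    have key : ∀ d i₀ : ℕ, y (i₀ + d * N) = y i₀ := by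
      intro d
      induction d with
      | zero => simp
      | succ d ih =>
        intro i₀
        have : i₀ + (d + 1) * N = (i₀ + d * N) + N := by ring
        rw [this, hyadd, ih]
    conv_rhs => rw [← Nat.mod_add_div i N]
    rw [← key (i / N) (i % N), Nat.mul_comm (i / N) N]
  -- adjacency along y
  have hyadj : ∀ i : ℕ, (G.boxProd H).Adj (y i) (y (i + 1)) := by
    intro i
    obtain ⟨t, j, s, hj, hs, hi⟩ := hdecomp i
    rw [hi, hy_eq _ _ _ hj hs]
    by_cases hsm : s + 1 < m
    · -- same column, step along P
      have hi1 : t * (m * n) + (j * m + s) + 1 = t * (m * n) + (j * m + (s + 1)) := by ring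
      rw [hi1, hy_eq _ _ _ hj hsm]
      rw [SimpleGraph.boxProd_adj]
      left
      refine ⟨?_, rfl⟩
      by_cases hev : Even j
      · simp only [if_pos hev]
        exact hgadj t _ _ (hPadj s hsm)
      · simp only [if_neg hev]
        have h1 : m - 1 - s = (m - 1 - (s + 1)) + 1 := by omega
        rw [h1]
        exact hgadj t _ _ (hPadj (m - 1 - (s + 1)) (by omega)).symm
    · have hsm' : s = m - 1 := by omega
      by_cases hjn : j + 1 < n
      · -- step along Q
        have hi1 : t * (m * n) + (j * m + s) + 1 = t * (m * n) + ((j + 1) * m + 0) := by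
          have h2 : (j + 1) * m = j * m + m := by ring
          omega
        rw [hi1, hy_eq _ _ _ hjn hm]
        rw [SimpleGraph.boxProd_adj]
        right
        refine ⟨hhadj t _ _ (hQadj j hjn), ?_⟩
        by_cases hev : Even j
        · have hev' : ¬ Even (j + 1) := by simp [Nat.even_add_one, hev]
          simp only [if_pos hev, if_neg hev', hsm', Nat.sub_zero]
        · have hev' : Even (j + 1) := by simpa [Nat.even_add_one] using hev
          simp only [if_neg hev, if_pos hev', hsm', Nat.sub_self]
      · -- wrap to next copy
        have hjn' : j = n - 1 := by omega
        have hjodd : ¬ Even j := by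
          have hj1 : j + 1 = n := by omega
          have hev : Even (j + 1) := hj1 ▸ hneven
          rwa [Nat.even_add_one] at hev
        have hi1 : t * (m * n) + (j * m + s) + 1 = (t + 1) * (m * n) + (0 * m + 0) := by
          have h2 : (t + 1) * (m * n) = t * (m * n) + m * n := by ring
          have h3 : (n - 1 + 1) * m = (n - 1) * m + m := by ring
          have h5 : n - 1 + 1 = n := by omega
          have h6 : n * m = m * n := Nat.mul_comm n m
          rw [h5] at h3
          have h7 : j * m = (n - 1) * m := by rw [hjn']
          omega
        rw [hi1, hy_eq _ _ _ hn0 hm]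
        simp only [if_neg hjodd, if_pos (Even.zero), hsm']
        have hz : m - 1 - (m - 1) = 0 := by omega
        rw [hz, hjn', hP0, hQ0, hQlast]
        rw [SimpleGraph.boxProd_adj]
        left
        constructor
        · rw [Function.iterate_succ_apply]
          exact hgadj t _ _ hadj
        · show (⇑h)^[t] (h v) = (⇑h)^[t + 1] v
          rw [Function.iterate_succ_apply]
  -- the automorphism of the box product
  let f : G.boxProd H ≃g G.boxProd H :=
    { toEquiv := Equiv.prodCongr g.toEquiv h.toEquiv
      map_rel_iff' := by
        rintro ⟨a₁, b₁⟩ ⟨a₂, b₂⟩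
        simp [SimpleGraph.boxProd_adj, g.map_adj_iff, h.map_adj_iff,
          g.toEquiv.injective.eq_iff, h.toEquiv.injective.eq_iff] }
  have hf_apply : ∀ p : V × W, f p = (g p.1, h p.2) := fun p => rfl
  have hyshift : ∀ i : ℕ, f (y i) = y (i + m * n) := by
    intro i
    obtain ⟨t, j, s, hj, hs, hi⟩ := hdecomp i
    have hi1 : i + m * n = (t + 1) * (m * n) + (j * m + s) := by rw [hi]; ring
    rw [hi1, hi, hy_eq _ _ _ hj hs, hy_eq _ _ _ hj hs, hf_apply]
    simp only [Function.iterate_succ_apply']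
  -- injectivity of y on [0, N)
  have hyinj : ∀ i i' : ℕ, i < N → i' < N → y i = y i' → i = i' := by
    intro i i' hiN hiN' heq
    obtain ⟨t, j, s, hj, hs, hi⟩ := hdecomp i
    obtain ⟨t', j', s', hj', hs', hi'⟩ := hdecomp i'
    have ht : t < k := by
      by_contra hcon
      push_neg at hcon
      have : k * (m * n) ≤ t * (m * n) := Nat.mul_le_mul_right _ hcon
      omega
    have ht' : t' < k := by
      by_contra hcon
      push_neg at hcon
      have : k * (m * n) ≤ t' * (m * n) := Nat.mul_le_mul_right _ hcon
      omega
    rw [hi, hi', hy_eq _ _ _ hj hs, hy_eq _ _ _ hj' hs', Prod.mk.injEq] at heq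
    obtain ⟨heq1, heq2⟩ := heq
    have hpos : (if Even j then s else m - 1 - s) < m := by split <;> omega
    have hpos' : (if Even j' then s' else m - 1 - s') < m := by split <;> omega
    obtain ⟨htt, hposeq⟩ := hkey t t' _ _ ht ht' hpos hpos' heq1
    subst htt
    have hjj : j = j' := by
      have hq : Lq.getD j v = Lq.getD j' v := (hhinj.iterate t) heq2
      rw [List.getD_eq_getElem _ _ (by omega), List.getD_eq_getElem _ _ (by omega)] at hq
      exact (hQnodup.getElem_inj_iff).1 hq
    subst hjj
    have hss : s = s' := by
      by_cases hev : Even j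
      · rw [if_pos hev, if_pos hev] at hposeq; exact hposeq
      · rw [if_neg hev, if_neg hev] at hposeq; omega
    omega
  -- assemble the cycle
  have hvaladd : ∀ (i : ZMod N) (c : ℕ), (i + (c : ZMod N)).val = (i.val + c) % N := by
    intro i c
    rw [ZMod.val_add, ZMod.val_natCast]
    conv_rhs => rw [Nat.add_mod]
    rw [Nat.mod_eq_of_lt (ZMod.val_lt i)]
  refine ⟨fun i => y i.val, ⟨⟨?_, ?_⟩, ⟨m * n, hN⟩, f, ?_⟩⟩
  · -- bijective
    rw [Fintype.bijective_iff_injective_and_card]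
    constructor
    · intro i i' heq
      have := hyinj i.val i'.val (ZMod.val_lt i) (ZMod.val_lt i') heq
      exact ZMod.val_injective N this
    · simp [ZMod.card, hN_def]
  · -- adjacency
    intro i
    have h1 : (1 : ZMod N) = ((1 : ℕ) : ZMod N) := by norm_cast
    show (G.boxProd H).Adj (y i.val) (y (i + 1).val)
    rw [h1, hvaladd, hymod]
    exact hyadj i.val
  · -- symmetry
    intro i
    have hNk : N / k = m * n := by
      rw [hN, Nat.mul_div_cancel_left _ (by omega : 0 < k)]
    show f (y i.val) = y (i + ((N / k : ℕ) : ZMod N)).val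
    rw [hNk, hvaladd, hymod]
    exact hyshift i.val
end

section
/- Let G be a finite group, S ⊆ G a generating set closed under inverses with e ∉ S, let g ∈ G and s ∈ S. If there exists a path in the Cayley graph Γ(G,S) from the identity e to g·s that intersects every right coset of the cyclic subgroup ⟨g⟩ exactly once, then the Hamilton compression satisfies κ(Γ(G,S)) ≥ ord(g), where ord(g) is the order of g in G. -/
noncomputable def hamCompression {V : Type*} (G : SimpleGraph V) : ℕ :=
  sSup {k | ∃ (N : ℕ) (x : ZMod N → V), IsSymmHamCycle G x k}

/-- The Cayley graph of a group `G` with connection set `S` (closed under inverses and not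
containing the identity): `x` and `y` are adjacent iff `y = x * s` for some `s ∈ S`. -/
def cayley {G : Type*} [Group G] (S : Set G) (hS : ∀ s ∈ S, s⁻¹ ∈ S)
    (h1 : (1 : G) ∉ S) : SimpleGraph G where
  Adj x y := x⁻¹ * y ∈ S
  symm := by
    constructor
    intro x y hxy
    have := hS _ hxy
    rwa [mul_inv_rev, inv_inv] at this
  loopless := by
    constructor
    intro x hx
    exact h1 (by simpa using hx)

lemma support_eq_map' {V : Type*} {G : SimpleGraph V} : ∀ {u v : V} (p : G.Walk u v),
    p.support = (List.range (p.length + 1)).map p.getVert := by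
  intro u v p
  induction p with
  | nil => simp [List.range_succ]
  | cons h q ih =>
    rw [SimpleGraph.Walk.support_cons, ih, SimpleGraph.Walk.length_cons,
      List.range_succ_eq_map (n := _ + 1)]
    simp [SimpleGraph.Walk.getVert_cons_succ, List.map_map, Function.comp_def]

lemma getVert_injOn' {V : Type*} {G : SimpleGraph V} {u v : V} {p : G.Walk u v}
    (hp : p.IsPath) {i j : ℕ} (hi : i ≤ p.length) (hj : j ≤ p.length)
    (h : p.getVert i = p.getVert j) : i = j := by
  have hnd := hp.support_nodup
  rw [support_eq_map'] at hnd
  exact List.inj_on_of_nodup_map hnd (x := i) (y := j)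
    (by simp [Nat.lt_succ_iff, hi]) (by simp [Nat.lt_succ_iff, hj]) h

lemma cayley_adj {G : Type*} [Group G] (S : Set G) (hS : ∀ s ∈ S, s⁻¹ ∈ S)
    (h1 : (1 : G) ∉ S) (a b : G) : (cayley S hS h1).Adj a b ↔ a⁻¹ * b ∈ S := Iff.rfl


/-- Compression version of the factor group lemma: if there is a path in the Cayley graph
`Γ(G,S)` from the identity to `g * s` (where `s ∈ S`) meeting every right coset of `⟨g⟩`
exactly once, then `κ(Γ(G,S)) ≥ ord(g)`. -/
theorem stmt17 {G : Type*} [Group G] [Fintype G] (S : Set G)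
    (hS : ∀ s ∈ S, s⁻¹ ∈ S) (h1 : (1 : G) ∉ S)
    (hgen : Subgroup.closure S = ⊤)
    (g s : G) (hs : s ∈ S)
    (P : (cayley S hS h1).Walk 1 (g * s)) (hP : P.IsPath)
    (hcoset : ∀ c : G, ∃! y : G, y ∈ P.support ∧ y * c⁻¹ ∈ Subgroup.zpowers g) :
    orderOf g ≤ hamCompression (cayley S hS h1) := by
  classical
  set m := orderOf g with hm
  have hm0 : 0 < m := orderOf_pos g
  set L := P.length with hL
  set N := m * (L + 1) with hN
  have hN0 : 0 < N := Nat.mul_pos hm0 (Nat.succ_pos L)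
  have hL1 : 0 < L + 1 := Nat.succ_pos L
  set y : ℕ → G := P.getVert with hy
  have hy0 : y 0 = 1 := P.getVert_zero
  have hyL : y L = g * s := P.getVert_length
  set x' : ℕ → G := fun n => g ^ (n / (L + 1)) * y (n % (L + 1)) with hx'
  -- periodicity
  have hper : ∀ n, x' (n + N) = x' n := by
    intro n
    have h1' : (n + N) / (L + 1) = n / (L + 1) + m := by
      rw [hN, Nat.mul_comm, Nat.add_mul_div_left _ _ hL1]
    have h2' : (n + N) % (L + 1) = n % (L + 1) := by
      rw [hN, Nat.mul_comm, Nat.add_mul_mod_self_left]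
    simp only [hx', h1', h2', pow_add, hm, pow_orderOf_eq_one, mul_one]
  have hperk : ∀ n k, x' (n + k * N) = x' n := by
    intro n k
    induction k with
    | zero => simp
    | succ k ih => rw [Nat.succ_mul, ← Nat.add_assoc, hper, ih]
  have hmod : ∀ a b, a % N = b % N → x' a = x' b := by
    intro a b hab
    have ha := Nat.div_add_mod a N
    have hb := Nat.div_add_mod b N
    calc x' a = x' (a % N + (a / N) * N) := by rw [Nat.add_comm, Nat.mul_comm]; rw [ha]
    _ = x' (a % N) := hperk _ _
    _ = x' (b % N) := by rw [hab]
    _ = x' (b % N + (b / N) * N) := (hperk _ _).symm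
    _ = x' b := by rw [Nat.add_comm, Nat.mul_comm]; rw [hb]
  haveI : NeZero N := ⟨hN0.ne'⟩
  set x : ZMod N → G := fun i => x' i.val with hxdef
  have hshift : ∀ (i : ZMod N) (c : ℕ), x (i + (c : ZMod N)) = x' (i.val + c) := by
    intro i c
    apply hmod
    have : ((i + (c : ZMod N)).val : ZMod N) = ((i.val + c : ℕ) : ZMod N) := by
      push_cast [ZMod.natCast_val, ZMod.cast_id]
      ring
    exact (ZMod.natCast_eq_natCast_iff' _ _ _).mp this
  have hmem : ∀ n ≤ L, y n ∈ P.support := by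
    intro n hn
    exact SimpleGraph.Walk.mem_support_iff_exists_getVert.mpr ⟨n, rfl, hn⟩
  -- injectivity
  have hinj : Function.Injective x := by
    intro i j hij
    have key : ∀ a b : ℕ, a < N → b < N → x' a = x' b → a = b := by
      intro a b ha hb hab
      have hqa : a / (L + 1) < m :=
        Nat.div_lt_of_lt_mul (by rw [hN, Nat.mul_comm] at ha; exact ha)
      have hqb : b / (L + 1) < m :=
        Nat.div_lt_of_lt_mul (by rw [hN, Nat.mul_comm] at hb; exact hb)
      have hra : a % (L + 1) < L + 1 := Nat.mod_lt _ hL1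
      have hrb : b % (L + 1) < L + 1 := Nat.mod_lt _ hL1
      simp only [hx'] at hab
      have hcos : y (a % (L+1)) * (y (b % (L+1)))⁻¹ ∈ Subgroup.zpowers g := by
        have heq : y (a % (L+1)) * (y (b % (L+1)))⁻¹
            = (g ^ (a / (L+1)))⁻¹ * g ^ (b / (L+1)) := by
          rw [eq_inv_mul_iff_mul_eq, ← mul_assoc, hab, mul_assoc, mul_inv_cancel, mul_one]
        rw [heq]
        exact mul_mem (inv_mem (Subgroup.npow_mem_zpowers _ _)) (Subgroup.npow_mem_zpowers _ _)
      obtain ⟨z, hz, huniq⟩ := hcoset (y (b % (L+1)))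
      have h1' : y (a % (L+1)) = z := huniq _ ⟨hmem _ (Nat.lt_succ_iff.mp hra), hcos⟩
      have h2' : y (b % (L+1)) = z := huniq _ ⟨hmem _ (Nat.lt_succ_iff.mp hrb), by
        rw [mul_inv_cancel]; exact Subgroup.one_mem _⟩
      have hreq : a % (L+1) = b % (L+1) :=
        getVert_injOn' hP (Nat.lt_succ_iff.mp hra) (Nat.lt_succ_iff.mp hrb) (h1'.trans h2'.symm)
      have hgeq : g ^ (a / (L+1)) = g ^ (b / (L+1)) := by
        rw [hreq] at hab
        exact mul_right_cancel hab
      have hqeq : a / (L+1) = b / (L+1) := by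
        have := pow_inj_mod.mp hgeq
        rwa [← hm, Nat.mod_eq_of_lt hqa, Nat.mod_eq_of_lt hqb] at this
      calc a = (L+1) * (a / (L+1)) + a % (L+1) := (Nat.div_add_mod a (L+1)).symm
      _ = (L+1) * (b / (L+1)) + b % (L+1) := by rw [hreq, hqeq]
      _ = b := Nat.div_add_mod b (L+1)
    exact ZMod.val_injective N (key i.val j.val (ZMod.val_lt i) (ZMod.val_lt j) hij)
  -- surjectivity
  have hsurj : Function.Surjective x := by
    intro z
    obtain ⟨w, ⟨hwsup, hwcos⟩, -⟩ := hcoset z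
    obtain ⟨r, hr, hrL⟩ := SimpleGraph.Walk.mem_support_iff_exists_getVert.mp hwsup
    obtain ⟨k, hk⟩ := hwcos
    have hz : z = g ^ (-k) * w := by
      have hwz : w * z⁻¹ = g ^ k := hk.symm
      rw [zpow_neg, ← hwz]
      group
    obtain ⟨n, hn⟩ := Subgroup.mem_zpowers_iff.mp
      ((Subgroup.zpowers g).zpow_mem (Subgroup.mem_zpowers g) (-k))
    have hq : g ^ ((n % (m : ℤ)).toNat) = g ^ (-k) := by
      rw [← hn, ← zpow_natCast,
        Int.toNat_of_nonneg (Int.emod_nonneg n (by exact_mod_cast hm0.ne')),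
        hm, zpow_mod_orderOf]
    set q := (n % (m : ℤ)).toNat with hqdef
    have hqm : q < m := by
      have := Int.emod_lt_of_pos n (by exact_mod_cast hm0 : (0:ℤ) < (m:ℤ))
      omega
    refine ⟨(((L + 1) * q + r : ℕ) : ZMod N), ?_⟩
    have hlt : (L + 1) * q + r < N := by
      calc (L + 1) * q + r < (L + 1) * (q + 1) := by rw [Nat.mul_add, Nat.mul_one]; omega
      _ ≤ (L + 1) * m := Nat.mul_le_mul_left _ hqm
      _ = N := by rw [hN, Nat.mul_comm]
    have hval : (((L + 1) * q + r : ℕ) : ZMod N).val = (L + 1) * q + r := by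
      rw [ZMod.val_natCast, Nat.mod_eq_of_lt hlt]
    have hdiv : ((L + 1) * q + r) / (L + 1) = q := by
      rw [Nat.mul_add_div hL1, Nat.div_eq_of_lt (by omega), Nat.add_zero]
    have hmd : ((L + 1) * q + r) % (L + 1) = r := by
      rw [Nat.add_comm, Nat.add_mul_mod_self_left, Nat.mod_eq_of_lt (by omega)]
    have hr' : y r = w := hr
    show x' _ = z
    rw [hval]
    show g ^ (((L + 1) * q + r) / (L + 1)) * y (((L + 1) * q + r) % (L + 1)) = z
    rw [hdiv, hmd, hr', hq, ← hz]
  -- adjacency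
  have hadj : ∀ i : ZMod N, (cayley S hS h1).Adj (x i) (x (i + 1)) := by
    intro i
    have h1' : x (i + 1) = x' (i.val + 1) := by
      have := hshift i 1
      simpa using this
    rw [h1']
    set q := i.val / (L + 1) with hqdef
    set r := i.val % (L + 1) with hrdef
    have hir : i.val = (L + 1) * q + r := (Nat.div_add_mod i.val (L+1)).symm
    have hrlt : r < L + 1 := Nat.mod_lt _ hL1
    have hxi : x i = g ^ q * y r := rfl
    rcases Nat.lt_or_ge r L with hlt | hge
    · have hdiv : (i.val + 1) / (L+1) = q := by
        rw [hir]
        rw [show (L+1) * q + r + 1 = (L+1) * q + (r+1) by omega,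
          Nat.mul_add_div hL1, Nat.div_eq_of_lt (by omega), Nat.add_zero]
      have hmd : (i.val + 1) % (L+1) = r + 1 := by
        rw [hir, show (L+1) * q + r + 1 = (r+1) + (L+1) * q by omega,
          Nat.add_mul_mod_self_left, Nat.mod_eq_of_lt (by omega)]
      have hx1 : x' (i.val + 1) = g ^ q * y (r + 1) := by
        show g ^ ((i.val + 1) / (L+1)) * y ((i.val + 1) % (L+1)) = _
        rw [hdiv, hmd]
      rw [hxi, hx1, cayley_adj]
      have hpadj := P.adj_getVert_succ (i := r) hlt
      rw [cayley_adj] at hpadj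
      have : (g ^ q * y r)⁻¹ * (g ^ q * y (r+1)) = (y r)⁻¹ * y (r+1) := by group
      rw [this]
      exact hpadj
    · have hrL : r = L := by omega
      have hdiv : (i.val + 1) / (L+1) = q + 1 := by
        rw [hir, hrL, show (L+1) * q + L + 1 = (L+1) * (q+1) by ring,
          Nat.mul_div_cancel_left _ hL1]
      have hmd : (i.val + 1) % (L+1) = 0 := by
        rw [hir, hrL, show (L+1) * q + L + 1 = (L+1) * (q+1) by ring,
          Nat.mul_mod_right]
      have hx1 : x' (i.val + 1) = g ^ (q + 1) := by
        show g ^ ((i.val + 1) / (L+1)) * y ((i.val + 1) % (L+1)) = _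
        rw [hdiv, hmd, hy0, mul_one]
      rw [hxi, hrL, hyL, hx1, cayley_adj]
      have : (g ^ q * (g * s))⁻¹ * g ^ (q + 1) = s⁻¹ := by
        rw [pow_succ]
        group
      rw [this]
      exact hS _ hs
  -- the symmetric Hamilton cycle
  have hsym : IsSymmHamCycle (cayley S hS h1) x m := by
    refine ⟨⟨⟨hinj, hsurj⟩, hadj⟩, Dvd.intro _ rfl, ?_⟩
    refine ⟨⟨Equiv.mulLeft g, ?_⟩, ?_⟩
    · intro a b
      show (cayley S hS h1).Adj (g * a) (g * b) ↔ (cayley S hS h1).Adj a b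
      rw [cayley_adj, cayley_adj]
      have : (g * a)⁻¹ * (g * b) = a⁻¹ * b := by group
      rw [this]
    · intro i
      have hNm : N / m = L + 1 := by rw [hN, Nat.mul_div_cancel_left _ hm0]
      rw [hNm, hshift]
      show g * x' i.val = x' (i.val + (L + 1))
      have hdiv : (i.val + (L+1)) / (L+1) = i.val / (L+1) + 1 := Nat.add_div_right _ hL1
      have hmd : (i.val + (L+1)) % (L+1) = i.val % (L+1) := Nat.add_mod_right _ _
      show g * (g ^ (i.val / (L+1)) * y (i.val % (L+1)))
        = g ^ ((i.val + (L+1)) / (L+1)) * y ((i.val + (L+1)) % (L+1))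
      rw [hdiv, hmd, pow_succ', mul_assoc]
  -- conclude
  apply le_csSup
  · refine ⟨Fintype.card G, ?_⟩
    rintro k ⟨N', x'', ⟨⟨hbij, -⟩, hk, -⟩⟩
    have hN' : N' ≠ 0 := by
      rintro rfl
      haveI : Infinite (ZMod 0) := inferInstanceAs (Infinite ℤ)
      haveI : Finite (ZMod 0) := Finite.of_equiv G (Equiv.ofBijective _ hbij).symm
      exact not_finite (ZMod 0)
    haveI : NeZero N' := ⟨hN'⟩
    have hcard : N' = Fintype.card G := by
      rw [← ZMod.card N']
      exact Fintype.card_of_bijective hbij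
    exact hcard ▸ Nat.le_of_dvd (Nat.pos_of_ne_zero hN') hk
  · exact ⟨N, x, hsym⟩
end
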